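/- Let n ≥ 1, α, β, γ ∈ k^n, and λ ∈ (k^×)^n. Define α'_i = λ_i λ_{i−1}^{-1} α_i, β'_i = λ_{i+1} λ_{i−1}^{-1} β_i, γ'_i = λ_{i−1}^{-1} γ_i. Then the assignment e_i ↦ e_i, u_i ↦ λ_i u_i, d_i ↦ d_i extends to a k-algebra isomorphism H(α, β, γ) → H(α', β', γ'). -/
import Mathlib


/-- Generators of the path algebra of the doubled `n`-cycle quiver:
vertices `e i`, arrows `u i : i → i+1` and `d i : i+1 → i`. -/
inductive DUGen (n : ℕ) : Type
  | e : ZMod n → DUGen n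
  | u : ZMod n → DUGen n
  | d : ZMod n → DUGen n

variable (k : Type*) [Field k] (n : ℕ)

/-- The trivial path `e_i` in the free algebra. -/
def Ew (i : ZMod n) : FreeAlgebra k (DUGen n) := FreeAlgebra.ι k (DUGen.e i)
/-- The arrow `u_i : i → i+1` in the free algebra. -/
def Uw (i : ZMod n) : FreeAlgebra k (DUGen n) := FreeAlgebra.ι k (DUGen.u i)
/-- The arrow `d_i : i+1 → i` in the free algebra. -/
def Dw (i : ZMod n) : FreeAlgebra k (DUGen n) := FreeAlgebra.ι k (DUGen.d i)

variable [NeZero n]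

/-- The relations presenting the quiver down-up algebra `H(α,β,γ)`: the path algebra
relations for the doubled `n`-cycle quiver, together with the down-up relations
`d_{i-1}u_{i-1}u_i = α_i u_i d_i u_i + β_i u_i u_{i+1} d_{i+1} + γ_i u_i` and
`d_i d_{i-1} u_{i-1} = α_i d_i u_i d_i + β_i u_{i+1} d_{i+1} d_i + γ_i d_i`. -/
inductive DURel (α β γ : ZMod n → k) :
    FreeAlgebra k (DUGen n) → FreeAlgebra k (DUGen n) → Prop
  | ortho (i j : ZMod n) :
      DURel α β γ (Ew k n i * Ew k n j) (if i = j then Ew k n i else 0)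
  | total : DURel α β γ (∑ i : ZMod n, Ew k n i) 1
  | eu (i : ZMod n) : DURel α β γ (Ew k n i * Uw k n i) (Uw k n i)
  | ue (i : ZMod n) : DURel α β γ (Uw k n i * Ew k n (i+1)) (Uw k n i)
  | ed (i : ZMod n) : DURel α β γ (Ew k n (i+1) * Dw k n i) (Dw k n i)
  | de (i : ZMod n) : DURel α β γ (Dw k n i * Ew k n i) (Dw k n i)
  | rel1 (i : ZMod n) : DURel α β γ (Dw k n (i-1) * Uw k n (i-1) * Uw k n i)
      (α i • (Uw k n i * Dw k n i * Uw k n i)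
        + β i • (Uw k n i * Uw k n (i+1) * Dw k n (i+1)) + γ i • Uw k n i)
  | rel2 (i : ZMod n) : DURel α β γ (Dw k n i * Dw k n (i-1) * Uw k n (i-1))
      (α i • (Dw k n i * Uw k n i * Dw k n i)
        + β i • (Uw k n (i+1) * Dw k n (i+1) * Dw k n i) + γ i • Dw k n i)

/-- The quiver down-up algebra `H(α,β,γ)`. -/
abbrev Hdu (α β γ : ZMod n → k) := RingQuot (DURel k n α β γ)

variable (α β γ : ZMod n → k)

/-- The image of the trivial path `e_i` in `H(α,β,γ)`. -/
def eH (i : ZMod n) : Hdu k n α β γ := RingQuot.mkAlgHom k (DURel k n α β γ) (Ew k n i)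
/-- The image of the arrow `u_i` in `H(α,β,γ)`. -/
def uH (i : ZMod n) : Hdu k n α β γ := RingQuot.mkAlgHom k (DURel k n α β γ) (Uw k n i)
/-- The image of the arrow `d_i` in `H(α,β,γ)`. -/
def dH (i : ZMod n) : Hdu k n α β γ := RingQuot.mkAlgHom k (DURel k n α β γ) (Dw k n i)

section Aux

variable {k n α β γ}

theorem eH_mul (i j : ZMod n) :
    eH k n α β γ i * eH k n α β γ j = if i = j then eH k n α β γ i else 0 := by
  have := RingQuot.mkAlgHom_rel k (DURel.ortho (α := α) (β := β) (γ := γ) i j)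
  simpa [eH, map_mul, apply_ite (RingQuot.mkAlgHom k (DURel k n α β γ))] using this

theorem eH_total : (∑ i : ZMod n, eH k n α β γ i) = 1 := by
  have := RingQuot.mkAlgHom_rel k (DURel.total (α := α) (β := β) (γ := γ))
  simpa [eH, map_sum] using this

theorem eH_uH (i : ZMod n) : eH k n α β γ i * uH k n α β γ i = uH k n α β γ i := by
  have := RingQuot.mkAlgHom_rel k (DURel.eu (α := α) (β := β) (γ := γ) i)
  simpa [eH, uH, map_mul] using this

theorem uH_eH (i : ZMod n) : uH k n α β γ i * eH k n α β γ (i+1) = uH k n α β γ i := by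
  have := RingQuot.mkAlgHom_rel k (DURel.ue (α := α) (β := β) (γ := γ) i)
  simpa [eH, uH, map_mul] using this

theorem eH_dH (i : ZMod n) : eH k n α β γ (i+1) * dH k n α β γ i = dH k n α β γ i := by
  have := RingQuot.mkAlgHom_rel k (DURel.ed (α := α) (β := β) (γ := γ) i)
  simpa [eH, dH, map_mul] using this

theorem dH_eH (i : ZMod n) : dH k n α β γ i * eH k n α β γ i = dH k n α β γ i := by
  have := RingQuot.mkAlgHom_rel k (DURel.de (α := α) (β := β) (γ := γ) i)
  simpa [eH, dH, map_mul] using this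

theorem rel1H (i : ZMod n) :
    dH k n α β γ (i-1) * uH k n α β γ (i-1) * uH k n α β γ i
      = α i • (uH k n α β γ i * dH k n α β γ i * uH k n α β γ i)
        + β i • (uH k n α β γ i * uH k n α β γ (i+1) * dH k n α β γ (i+1))
        + γ i • uH k n α β γ i := by
  have := RingQuot.mkAlgHom_rel k (DURel.rel1 (α := α) (β := β) (γ := γ) i)
  simpa [eH, uH, dH, map_mul, map_add, map_smul] using this

theorem rel2H (i : ZMod n) :
    dH k n α β γ i * dH k n α β γ (i-1) * uH k n α β γ (i-1)
      = α i • (dH k n α β γ i * uH k n α β γ i * dH k n α β γ i)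
        + β i • (uH k n α β γ (i+1) * dH k n α β γ (i+1) * dH k n α β γ i)
        + γ i • dH k n α β γ i := by
  have := RingQuot.mkAlgHom_rel k (DURel.rel2 (α := α) (β := β) (γ := γ) i)
  simpa [eH, uH, dH, map_mul, map_add, map_smul] using this

end Aux

/-- Lift of the scaling assignment to the free algebra, valued in the target. -/
noncomputable def Fmap (α' β' γ' : ZMod n → k) (lam : ZMod n → k) :
    FreeAlgebra k (DUGen n) →ₐ[k] Hdu k n α' β' γ' :=
  FreeAlgebra.lift k fun g => match g with
    | .e i => eH k n α' β' γ' i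
    | .u i => lam i • uH k n α' β' γ' i
    | .d i => dH k n α' β' γ' i

@[simp] theorem Fmap_Ew (α' β' γ' lam : ZMod n → k) (i : ZMod n) :
    Fmap k n α' β' γ' lam (Ew k n i) = eH k n α' β' γ' i := by
  simp [Fmap, Ew]

@[simp] theorem Fmap_Uw (α' β' γ' lam : ZMod n → k) (i : ZMod n) :
    Fmap k n α' β' γ' lam (Uw k n i) = lam i • uH k n α' β' γ' i := by
  simp [Fmap, Uw]

@[simp] theorem Fmap_Dw (α' β' γ' lam : ZMod n → k) (i : ZMod n) :
    Fmap k n α' β' γ' lam (Dw k n i) = dH k n α' β' γ' i := by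
  simp [Fmap, Dw]

theorem Fmap_rel (α β γ α' β' γ' lam : ZMod n → k)
    (hα : ∀ i, lam (i-1) * α' i = lam i * α i)
    (hβ : ∀ i, lam (i-1) * β' i = lam (i+1) * β i)
    (hγ : ∀ i, lam (i-1) * γ' i = γ i)
    {x y : FreeAlgebra k (DUGen n)} (h : DURel k n α β γ x y) :
    Fmap k n α' β' γ' lam x = Fmap k n α' β' γ' lam y := by
  induction h with
  | ortho i j =>
      simp [map_mul, apply_ite (Fmap k n α' β' γ' lam), eH_mul]
  | total => simp [map_sum, eH_total]
  | eu i => simp [map_mul, mul_smul_comm, eH_uH]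
  | ue i => simp [map_mul, smul_mul_assoc, uH_eH]
  | ed i => simp [map_mul, eH_dH]
  | de i => simp [map_mul, dH_eH]
  | rel1 i =>
      simp only [map_mul, map_add, map_smul, Fmap_Ew, Fmap_Uw, Fmap_Dw,
        smul_mul_assoc, mul_smul_comm]
      rw [rel1H i]
      match_scalars
      · linear_combination lam i * hα i
      · linear_combination lam i * hβ i
      · linear_combination lam i * hγ i
  | rel2 i =>
      simp only [map_mul, map_add, map_smul, Fmap_Ew, Fmap_Uw, Fmap_Dw,
        smul_mul_assoc, mul_smul_comm]
      rw [rel2H i]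
      match_scalars
      · linear_combination hα i
      · linear_combination hβ i
      · linear_combination hγ i

/-- The algebra homomorphism `H(α,β,γ) → H(α',β',γ')` induced by a scaling. -/
noncomputable def scaleHom (α β γ α' β' γ' lam : ZMod n → k)
    (hα : ∀ i, lam (i-1) * α' i = lam i * α i)
    (hβ : ∀ i, lam (i-1) * β' i = lam (i+1) * β i)
    (hγ : ∀ i, lam (i-1) * γ' i = γ i) :
    Hdu k n α β γ →ₐ[k] Hdu k n α' β' γ' :=
  RingQuot.liftAlgHom k ⟨Fmap k n α' β' γ' lam,
    fun {_ _} h => Fmap_rel k n α β γ α' β' γ' lam hα hβ hγ h⟩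

@[simp] theorem scaleHom_mk (α β γ α' β' γ' lam : ZMod n → k) (hα hβ hγ)
    (x : FreeAlgebra k (DUGen n)) :
    scaleHom k n α β γ α' β' γ' lam hα hβ hγ (RingQuot.mkAlgHom k (DURel k n α β γ) x)
      = Fmap k n α' β' γ' lam x := by
  simp [scaleHom, RingQuot.liftAlgHom_mkAlgHom_apply]

/-- Scaling isomorphism: for `λ ∈ (k^×)^n`, with `α'_i = λ_i λ_{i-1}⁻¹ α_i`,
`β'_i = λ_{i+1} λ_{i-1}⁻¹ β_i`, `γ'_i = λ_{i-1}⁻¹ γ_i`, the assignment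
`e_i ↦ e_i`, `u_i ↦ λ_i u_i`, `d_i ↦ d_i` extends to a `k`-algebra isomorphism
`H(α,β,γ) → H(α',β',γ')`. -/
theorem stmt12 (lam : ZMod n → k) (hlam : ∀ i, lam i ≠ 0) :
    ∃ φ : Hdu k n α β γ ≃ₐ[k]
      Hdu k n (fun i => lam i * (lam (i-1))⁻¹ * α i)
        (fun i => lam (i+1) * (lam (i-1))⁻¹ * β i)
        (fun i => (lam (i-1))⁻¹ * γ i),
    ∀ i : ZMod n,
      φ (eH k n α β γ i)
          = eH k n (fun i => lam i * (lam (i-1))⁻¹ * α i)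
              (fun i => lam (i+1) * (lam (i-1))⁻¹ * β i)
              (fun i => (lam (i-1))⁻¹ * γ i) i ∧
      φ (uH k n α β γ i)
          = lam i • uH k n (fun i => lam i * (lam (i-1))⁻¹ * α i)
              (fun i => lam (i+1) * (lam (i-1))⁻¹ * β i)
              (fun i => (lam (i-1))⁻¹ * γ i) i ∧
      φ (dH k n α β γ i)
          = dH k n (fun i => lam i * (lam (i-1))⁻¹ * α i)
              (fun i => lam (i+1) * (lam (i-1))⁻¹ * β i)
              (fun i => (lam (i-1))⁻¹ * γ i) i := by
  set α' := fun i => lam i * (lam (i-1))⁻¹ * α i with hα'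
  set β' := fun i => lam (i+1) * (lam (i-1))⁻¹ * β i with hβ'
  set γ' := fun i => (lam (i-1))⁻¹ * γ i with hγ'
  have hc : ∀ i : ZMod n, lam (i-1) * (lam (i-1))⁻¹ = 1 := fun i => mul_inv_cancel₀ (hlam (i-1))
  have hαf : ∀ i, lam (i-1) * α' i = lam i * α i := fun i => by
    simp only [hα']; rw [show lam (i-1) * (lam i * (lam (i-1))⁻¹ * α i)
      = lam (i-1) * (lam (i-1))⁻¹ * (lam i * α i) by ring, hc i, one_mul]
  have hβf : ∀ i, lam (i-1) * β' i = lam (i+1) * β i := fun i => by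
    simp only [hβ']; rw [show lam (i-1) * (lam (i+1) * (lam (i-1))⁻¹ * β i)
      = lam (i-1) * (lam (i-1))⁻¹ * (lam (i+1) * β i) by ring, hc i, one_mul]
  have hγf : ∀ i, lam (i-1) * γ' i = γ i := fun i => by
    simp only [hγ']; rw [show lam (i-1) * ((lam (i-1))⁻¹ * γ i)
      = lam (i-1) * (lam (i-1))⁻¹ * γ i by ring, hc i, one_mul]
  have hc2 : ∀ i : ZMod n, (lam i)⁻¹ * lam i = 1 := fun i => inv_mul_cancel₀ (hlam i)
  have hαb : ∀ i, (lam (i-1))⁻¹ * α i = (lam i)⁻¹ * α' i := fun i => by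
    simp only [hα']; rw [show (lam i)⁻¹ * (lam i * (lam (i-1))⁻¹ * α i)
      = (lam i)⁻¹ * lam i * ((lam (i-1))⁻¹ * α i) by ring, hc2 i, one_mul]
  have hβb : ∀ i, (lam (i-1))⁻¹ * β i = (lam (i+1))⁻¹ * β' i := fun i => by
    simp only [hβ']; rw [show (lam (i+1))⁻¹ * (lam (i+1) * (lam (i-1))⁻¹ * β i)
      = (lam (i+1))⁻¹ * lam (i+1) * ((lam (i-1))⁻¹ * β i) by ring, hc2 (i+1), one_mul]
  have hγb : ∀ i, (lam (i-1))⁻¹ * γ i = γ' i := fun i => rfl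
  let f := scaleHom k n α β γ α' β' γ' lam hαf hβf hγf
  let g := scaleHom k n α' β' γ' α β γ (fun i => (lam i)⁻¹) hαb hβb hγb
  have comp1 : g.comp f = AlgHom.id k _ := by
    apply RingQuot.ringQuot_ext'
    apply FreeAlgebra.hom_ext
    funext x
    cases x with
    | e i =>
        show (g.comp f) (RingQuot.mkAlgHom k _ (Ew k n i)) = RingQuot.mkAlgHom k _ (Ew k n i)
        simp [f, g, eH]
    | u i =>
        show (g.comp f) (RingQuot.mkAlgHom k _ (Uw k n i)) = RingQuot.mkAlgHom k _ (Uw k n i)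
        simp only [AlgHom.comp_apply, AlgHom.id_apply, f, g, scaleHom_mk, Fmap_Uw, map_smul]
        rw [uH, scaleHom_mk, Fmap_Uw, smul_smul, mul_inv_cancel₀ (hlam i), one_smul, uH]
    | d i =>
        show (g.comp f) (RingQuot.mkAlgHom k _ (Dw k n i)) = RingQuot.mkAlgHom k _ (Dw k n i)
        simp [f, g, dH]
  have comp2 : f.comp g = AlgHom.id k _ := by
    apply RingQuot.ringQuot_ext'
    apply FreeAlgebra.hom_ext
    funext x
    cases x with
    | e i =>
        show (f.comp g) (RingQuot.mkAlgHom k _ (Ew k n i)) = RingQuot.mkAlgHom k _ (Ew k n i)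
        simp [f, g, eH]
    | u i =>
        show (f.comp g) (RingQuot.mkAlgHom k _ (Uw k n i)) = RingQuot.mkAlgHom k _ (Uw k n i)
        simp only [AlgHom.comp_apply, AlgHom.id_apply, f, g, scaleHom_mk, Fmap_Uw, map_smul]
        rw [uH, scaleHom_mk, Fmap_Uw, smul_smul, inv_mul_cancel₀ (hlam i), one_smul, uH]
    | d i =>
        show (f.comp g) (RingQuot.mkAlgHom k _ (Dw k n i)) = RingQuot.mkAlgHom k _ (Dw k n i)
        simp [f, g, dH]
  refine ⟨AlgEquiv.ofAlgHom f g comp2 comp1, fun i => ?_⟩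
  refine ⟨?_, ?_, ?_⟩
  · show f (eH k n α β γ i) = eH k n α' β' γ' i
    rw [eH, scaleHom_mk, Fmap_Ew]
  · show f (uH k n α β γ i) = lam i • uH k n α' β' γ' i
    rw [uH, scaleHom_mk, Fmap_Uw]
  · show f (dH k n α β γ i) = dH k n α' β' γ' i
    rw [dH, scaleHom_mk, Fmap_Dw]
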